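/- For every E ∈ (−2, 2), the principal value integral ∫_{−2}^{2} √(4 − t²)/(t − E) dt, i.e. the limit as ε → 0⁺ of ∫_{t∈[−2,2], |t−E|>ε} √(4 − t²)/(t − E) dt, exists and equals −πE. -/

import Mathlib

open Filter Topology MeasureTheory

noncomputable def Hfun (E t : ℝ) : ℝ :=
  Real.sqrt (4 - t^2) - E * Real.arcsin (t/2)
    - Real.sqrt (4 - E^2) * Real.log (4 - E*t + Real.sqrt (4 - E^2) * Real.sqrt (4 - t^2))

noncomputable def Ffun (E t : ℝ) : ℝ := Hfun E t + Real.sqrt (4 - E^2) * Real.log (t - E)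

lemma Npos (E : ℝ) (hE1 : -2 < E) (hE2 : E < 2) (t : ℝ) (h1 : -2 ≤ t) (h2 : t ≤ 2) :
    0 < 4 - E*t + Real.sqrt (4-E^2) * Real.sqrt (4-t^2) := by
  have hs := Real.sqrt_nonneg (4-E^2)
  have hr := Real.sqrt_nonneg (4-t^2)
  have hE4 : E^2 < 4 := by nlinarith
  have ht4 : t^2 ≤ 4 := by nlinarith
  have hsq : (E*t)^2 < 16 := by nlinarith [sq_nonneg E, sq_nonneg t]
  have hlt : E*t < 4 := by nlinarith [sq_nonneg (E*t - 4)]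
  nlinarith [mul_nonneg hs hr]

lemma Hcont (E : ℝ) (hE1 : -2 < E) (hE2 : E < 2) :
    ContinuousOn (Hfun E) (Set.Icc (-2:ℝ) 2) := by
  unfold Hfun
  apply ContinuousOn.sub
  apply ContinuousOn.sub
  · exact (Real.continuous_sqrt.comp (by continuity)).continuousOn
  · exact (continuous_const.mul (Real.continuous_arcsin.comp (continuous_id.div_const 2))).continuousOn
  · refine continuousOn_const.mul (ContinuousOn.log ?_ ?_)
    · exact ((continuous_const.sub (continuous_const.mul continuous_id)).add
        (continuous_const.mul (Real.continuous_sqrt.comp (by continuity)))).continuousOn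
    · intro t ht
      exact ne_of_gt (Npos E hE1 hE2 t ht.1 ht.2)

lemma Fcont (E : ℝ) (hE1 : -2 < E) (hE2 : E < 2) (a b : ℝ)
    (hsub : Set.Icc a b ⊆ Set.Icc (-2:ℝ) 2) (hne : ∀ t ∈ Set.Icc a b, t - E ≠ 0) :
    ContinuousOn (Ffun E) (Set.Icc a b) := by
  unfold Ffun
  refine ((Hcont E hE1 hE2).mono hsub).add (continuousOn_const.mul (ContinuousOn.log ?_ hne))
  exact (continuous_id.sub continuous_const).continuousOn

lemma fcont (E : ℝ) (a b : ℝ) (hne : ∀ t ∈ Set.Icc a b, t - E ≠ 0) :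
    ContinuousOn (fun t : ℝ => Real.sqrt (4 - t^2) / (t - E)) (Set.Icc a b) :=
  ContinuousOn.div (Real.continuous_sqrt.comp (by continuity)).continuousOn
    (continuous_id.sub continuous_const).continuousOn hne

lemma Ffun_deriv (E : ℝ) (hE : E ∈ Set.Ioo (-2 : ℝ) 2) (t : ℝ) (ht : t ∈ Set.Ioo (-2 : ℝ) 2)
    (hne : t ≠ E) : HasDerivAt (Ffun E) (Real.sqrt (4 - t^2) / (t - E)) t := by
  obtain ⟨hE1, hE2⟩ := hE
  obtain ⟨ht1, ht2⟩ := ht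
  have hs2 : Real.sqrt (4 - E^2) ^ 2 = 4 - E^2 := Real.sq_sqrt (by nlinarith)
  have hspos : 0 < Real.sqrt (4 - E^2) := Real.sqrt_pos.mpr (by nlinarith)
  have hr2 : Real.sqrt (4 - t^2) ^ 2 = 4 - t^2 := Real.sq_sqrt (by nlinarith)
  have hrpos : 0 < Real.sqrt (4 - t^2) := Real.sqrt_pos.mpr (by nlinarith)
  set s := Real.sqrt (4 - E^2) with hs
  set r := Real.sqrt (4 - t^2) with hr
  have hNpos : 0 < 4 - E*t + s*r := by nlinarith
  have htE : t - E ≠ 0 := sub_ne_zero.mpr hne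
  have hrne : r ≠ 0 := ne_of_gt hrpos
  have hNne : (4 - E*t + s*r) ≠ 0 := ne_of_gt hNpos
  have hpoly : HasDerivAt (fun x : ℝ => 4 - x^2) (-(2*t)) t := by
    simpa using (HasDerivAt.const_sub 4 (hasDerivAt_pow 2 t))
  have dsqrt : HasDerivAt (fun x : ℝ => Real.sqrt (4 - x^2)) (1/(2*r) * -(2*t)) t :=
    (Real.hasDerivAt_sqrt (by nlinarith)).comp t hpoly
  have darcsin : HasDerivAt (fun x : ℝ => Real.arcsin (x/2)) (1/Real.sqrt (1 - (t/2)^2) * 2⁻¹) t := by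
    have := (Real.hasDerivAt_arcsin (by intro h; rw [div_eq_iff (by norm_num : (2:ℝ) ≠ 0)] at h; simp only [id_eq] at h; linarith)
      (by intro h; rw [div_eq_iff (by norm_num : (2:ℝ) ≠ 0)] at h; simp only [id_eq] at h; linarith)).comp t
        ((hasDerivAt_id t).div_const 2)
    simpa [Function.comp_def] using this
  have dN : HasDerivAt (fun x : ℝ => 4 - E*x + s * Real.sqrt (4 - x^2))
      (-E + s * (1/(2*r) * -(2*t))) t := by
    have h1 : HasDerivAt (fun x : ℝ => 4 - E*x) (-E) t := by
      simpa using (HasDerivAt.const_sub 4 ((hasDerivAt_id t).const_mul E))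
    exact h1.add (dsqrt.const_mul s)
  have dlogN : HasDerivAt (fun x : ℝ => Real.log (4 - E*x + s * Real.sqrt (4 - x^2)))
      ((4 - E*t + s*r)⁻¹ * (-E + s * (1/(2*r) * -(2*t)))) t :=
    by simpa only [Function.comp_def] using (Real.hasDerivAt_log hNne).comp t dN
  have dlogt : HasDerivAt (fun x : ℝ => Real.log (x - E)) ((t - E)⁻¹) t := by
    have h1 : HasDerivAt (fun x : ℝ => x - E) 1 t := by simpa using (hasDerivAt_id t).sub_const E
    simpa [Function.comp_def] using (Real.hasDerivAt_log htE).comp t h1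
  have total : HasDerivAt (Ffun E)
      ((1/(2*r) * -(2*t) - E * (1/Real.sqrt (1 - (t/2)^2) * 2⁻¹)
        - s * ((4 - E*t + s*r)⁻¹ * (-E + s * (1/(2*r) * -(2*t))))) + s * (t - E)⁻¹) t := by
    exact ((dsqrt.sub (darcsin.const_mul E)).sub (dlogN.const_mul s)).add (dlogt.const_mul s)
  convert total using 1
  have hhalf : Real.sqrt (1 - (t/2)^2) = r / 2 := by
    rw [show (1 - (t/2)^2 : ℝ) = (r/2)^2 by nlinarith, Real.sqrt_sq (by positivity)]
  rw [hhalf]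
  have hkey : (E*r + s*t) * (t - E) = (s - r) * (4 - E*t + s*r) := by
    linear_combination (-r) * hs2 + s * hr2
  have e1 : 1/(2*r) * -(2*t) = -t/r := by field_simp
  have e2 : E * (1/(r/2) * (2:ℝ)⁻¹) = E/r := by field_simp
  have e3 : (-E + s * (1/(2*r) * -(2*t))) = -((E*r + s*t)/r) := by field_simp; ring
  have h5 : (E*r+s*t)/(4-E*t+s*r) = (s-r)/(t-E) := by
    rw [div_eq_div_iff hNne htE]; linear_combination hkey
  have e4 : (4 - E*t + s*r)⁻¹ * (-E + s * (1/(2*r) * -(2*t))) = -((s - r)/(t-E)/r) := by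
    rw [e3]
    calc (4 - E*t + s*r)⁻¹ * -((E*r + s*t)/r)
        = -((E*r+s*t)/(4-E*t+s*r) * (1/r)) := by ring
      _ = -((s-r)/(t-E) * (1/r)) := by rw [h5]
      _ = -((s - r)/(t-E)/r) := by ring
  rw [e4, e1, e2]
  field_simp
  linear_combination hr2 - hs2

lemma FTC (E : ℝ) (hE1 : -2 < E) (hE2 : E < 2) (a b : ℝ) (hab : a ≤ b) (ha : -2 ≤ a) (hb : b ≤ 2)
    (hne : ∀ t ∈ Set.Icc a b, t - E ≠ 0) :
    ∫ t in Set.Ioc a b, Real.sqrt (4 - t^2)/(t-E) = Ffun E b - Ffun E a := by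
  rw [← intervalIntegral.integral_of_le hab]
  apply intervalIntegral.integral_eq_sub_of_hasDeriv_right_of_le hab
  · exact Fcont E hE1 hE2 a b (Set.Icc_subset_Icc ha hb) hne
  · intro x hx
    have hx' : x ∈ Set.Ioo (-2:ℝ) 2 := ⟨lt_of_le_of_lt ha hx.1, lt_of_lt_of_le hx.2 hb⟩
    exact (Ffun_deriv E ⟨hE1, hE2⟩ x hx'
      (sub_ne_zero.mp (hne x ⟨le_of_lt hx.1, le_of_lt hx.2⟩))).hasDerivWithinAt
  · exact (by rw [Set.uIcc_of_le hab]; exact fcont E a b hne :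
      ContinuousOn _ (Set.uIcc a b)).intervalIntegrable

lemma F2 (E : ℝ) (hE1 : -2 < E) (hE2 : E < 2) :
    Ffun E 2 = -(E*(Real.pi/2)) - Real.sqrt (4-E^2) * Real.log 2 := by
  have h0 : Real.sqrt (4 - (2:ℝ)^2) = 0 := by norm_num
  have harc : Real.arcsin ((2:ℝ)/2) = Real.pi/2 := by norm_num [Real.arcsin_one]
  unfold Ffun Hfun
  rw [h0, harc, mul_zero, add_zero,
    show (4 - E*2 : ℝ) = 2*(2-E) by ring,
    Real.log_mul (by norm_num) (by intro h; apply absurd h; intro h'; linarith [sub_eq_zero.mp h'] : (2:ℝ)-E ≠ 0)]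
  ring

lemma Fm2 (E : ℝ) (hE1 : -2 < E) (hE2 : E < 2) :
    Ffun E (-2) = E*(Real.pi/2) - Real.sqrt (4-E^2) * Real.log 2 := by
  have h0 : Real.sqrt (4 - (-2:ℝ)^2) = 0 := by norm_num
  have harc : Real.arcsin ((-2:ℝ)/2) = -(Real.pi/2) := by norm_num [Real.arcsin_neg_one]
  unfold Ffun Hfun
  rw [h0, harc, mul_zero, add_zero,
    show ((-2:ℝ) - E) = -(2+E) by ring, Real.log_neg_eq_log,
    show (4 - E*(-2) : ℝ) = 2*(2+E) by ring,
    Real.log_mul (by norm_num) (by intro h'; linarith [eq_neg_of_add_eq_zero_left h'] : (2:ℝ)+E ≠ 0)]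
  ring

/-- For `E ∈ (−2,2)`, the principal value integral
`∫_{−2}^{2} √(4 − t²)/(t − E) dt`, i.e. the limit as `ε → 0⁺` of the integral over
`{t ∈ [−2,2] : |t − E| > ε}`, exists and equals `−πE`. -/
theorem stmt17 (E : ℝ) (hE : E ∈ Set.Ioo (-2 : ℝ) 2) :
    Tendsto (fun ε : ℝ =>
        ∫ t in {t : ℝ | t ∈ Set.Icc (-2 : ℝ) 2 ∧ ε < |t - E|}, Real.sqrt (4 - t ^ 2) / (t - E))
      (𝓝[>] 0) (𝓝 (-(Real.pi * E))) := by
  obtain ⟨hE1, hE2⟩ := hE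
  set δ : ℝ := min (E + 2) (2 - E) with hδdef
  have hδpos : 0 < δ := lt_min (by linarith) (by linarith)
  have hEq : ∀ᶠ ε in 𝓝[>] (0:ℝ),
      (∫ t in {t : ℝ | t ∈ Set.Icc (-2:ℝ) 2 ∧ ε < |t - E|}, Real.sqrt (4 - t^2)/(t-E))
        = Hfun E (E-ε) - Hfun E (E+ε) + (Ffun E 2 - Ffun E (-2)) := by
    filter_upwards [Ioo_mem_nhdsGT_of_mem (Set.mem_Ico.mpr ⟨le_rfl, hδpos⟩)] with ε hε
    obtain ⟨hε0, hεδ⟩ := hε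
    have hεa : ε < E + 2 := lt_of_lt_of_le hεδ (min_le_left _ _)
    have hεb : ε < 2 - E := lt_of_lt_of_le hεδ (min_le_right _ _)
    have hset : {t : ℝ | t ∈ Set.Icc (-2:ℝ) 2 ∧ ε < |t - E|}
        = Set.Ico (-2) (E - ε) ∪ Set.Ioc (E + ε) 2 := by
      ext t
      simp only [Set.mem_setOf_eq, Set.mem_Icc, Set.mem_union, Set.mem_Ico, Set.mem_Ioc]
      constructor
      · rintro ⟨⟨h1, h2⟩, h3⟩
        rcases lt_abs.mp h3 with h | h
        · right; exact ⟨by linarith, h2⟩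
        · left; exact ⟨h1, by linarith⟩
      · rintro (⟨h1, h2⟩ | ⟨h1, h2⟩)
        · exact ⟨⟨h1, by linarith⟩, lt_abs.mpr (Or.inr (by linarith))⟩
        · exact ⟨⟨by linarith, h2⟩, lt_abs.mpr (Or.inl (by linarith))⟩
    have hne1 : ∀ t ∈ Set.Icc (-2:ℝ) (E - ε), t - E ≠ 0 := by
      intro t ht h
      have := sub_eq_zero.mp h
      have := ht.2
      linarith
    have hne2 : ∀ t ∈ Set.Icc (E + ε) (2:ℝ), t - E ≠ 0 := by
      intro t ht h
      have := sub_eq_zero.mp h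
      have := ht.1
      linarith
    have hi1 : IntegrableOn (fun t : ℝ => Real.sqrt (4 - t^2)/(t-E)) (Set.Ico (-2) (E-ε)) := by
      exact ((fcont E _ _ hne1).integrableOn_Icc).mono_set Set.Ico_subset_Icc_self
    have hi2 : IntegrableOn (fun t : ℝ => Real.sqrt (4 - t^2)/(t-E)) (Set.Ioc (E+ε) 2) := by
      exact ((fcont E _ _ hne2).integrableOn_Icc).mono_set Set.Ioc_subset_Icc_self
    have hdisj : Disjoint (Set.Ico (-2:ℝ) (E-ε)) (Set.Ioc (E+ε) 2) := by
      rw [Set.disjoint_left]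
      rintro x hx1 hx2
      have := hx1.2; have := hx2.1; linarith
    rw [hset, setIntegral_union hdisj measurableSet_Ioc hi1 hi2]
    have h1 : ∫ t in Set.Ico (-2:ℝ) (E-ε), Real.sqrt (4 - t^2)/(t-E)
        = Ffun E (E-ε) - Ffun E (-2) := by
      rw [← integral_Icc_eq_integral_Ico, integral_Icc_eq_integral_Ioc]
      exact FTC E hE1 hE2 (-2) (E-ε) (by linarith) le_rfl (by linarith) hne1
    have h2 : ∫ t in Set.Ioc (E+ε) (2:ℝ), Real.sqrt (4 - t^2)/(t-E)
        = Ffun E 2 - Ffun E (E+ε) :=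
      FTC E hE1 hE2 (E+ε) 2 (by linarith) (by linarith) le_rfl hne2
    rw [h1, h2]
    unfold Ffun
    rw [show E - ε - E = -ε by ring, show E + ε - E = ε by ring, Real.log_neg_eq_log]
    ring
  have hHc : ContinuousAt (Hfun E) E :=
    (Hcont E hE1 hE2).continuousAt (Icc_mem_nhds hE1 hE2)
  have hC : Ffun E 2 - Ffun E (-2) = -(Real.pi * E) := by
    rw [F2 E hE1 hE2, Fm2 E hE1 hE2]; ring
  have t1 : Tendsto (fun ε : ℝ => E - ε) (𝓝[>] 0) (𝓝 E) := by
    have hc : Continuous (fun ε : ℝ => E - ε) := continuous_const.sub continuous_id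
    have h := hc.tendsto (0:ℝ)
    simp only [sub_zero] at h
    exact h.mono_left nhdsWithin_le_nhds
  have t2 : Tendsto (fun ε : ℝ => E + ε) (𝓝[>] 0) (𝓝 E) := by
    have hc : Continuous (fun ε : ℝ => E + ε) := continuous_const.add continuous_id
    have h := hc.tendsto (0:ℝ)
    simp only [add_zero] at h
    exact h.mono_left nhdsWithin_le_nhds
  have hlim : Tendsto (fun ε : ℝ => Hfun E (E-ε) - Hfun E (E+ε) + (Ffun E 2 - Ffun E (-2)))
      (𝓝[>] 0) (𝓝 (-(Real.pi * E))) := by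
    have h := ((hHc.tendsto.comp t1).sub (hHc.tendsto.comp t2)).add_const
      (Ffun E 2 - Ffun E (-2))
    simpa [hC] using h
  exact hlim.congr' (hEq.mono fun ε h => h.symm)
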